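/- For a union-closed family K of subsets of a finite set Q containing ∅, the family Ǩ of members of K reachable from ∅ by a tight path in K is the unique maximal antimatroid contained in K: Ǩ is an antimatroid, and every antimatroid L with L ⊆ K satisfies L ⊆ Ǩ. -/
import Mathlib


variable {α : Type*} [DecidableEq α] [Fintype α]

/-- A family of subsets is union-closed. -/
def UnionClosed (K : Set (Finset α)) : Prop :=
  ∀ X ∈ K, ∀ Y ∈ K, X ∪ Y ∈ K

/-- There is a tight path in `K` from `S` to `T`: a chain of members of `K`
each obtained from the previous by adding exactly one element. -/
def TightPath (K : Set (Finset α)) (S T : Finset α) : Prop :=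
  ∃ (k : ℕ) (Y : ℕ → Finset α), Y 0 = S ∧ Y k = T ∧ (∀ i ≤ k, Y i ∈ K) ∧
    ∀ i < k, Y i ⊆ Y (i + 1) ∧ (Y (i + 1) \ Y i).card = 1

/-- The family of members of `K` reachable from `∅` by a tight path in `K`. -/
def checkFam (K : Set (Finset α)) : Set (Finset α) :=
  {X | X ∈ K ∧ TightPath K ∅ X}

/-- Accessibility: every nonempty member can lose some element and stay in the family. -/
def Accessible (K : Set (Finset α)) : Prop :=
  ∀ X ∈ K, X ≠ ∅ → ∃ x ∈ X, X.erase x ∈ K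

/-- An antimatroid: contains `∅`, union-closed, and accessible. -/
def IsAntimatroid (K : Set (Finset α)) : Prop :=
  ∅ ∈ K ∧ UnionClosed K ∧ Accessible K

lemma checkFam_empty {K : Set (Finset α)} (h : ∅ ∈ K) : (∅ : Finset α) ∈ checkFam K :=
  ⟨h, 0, fun _ => ∅, rfl, rfl, fun _ _ => h, fun i hi => absurd hi (Nat.not_lt_zero i)⟩

lemma checkFam_extend {K : Set (Finset α)} {A B : Finset α}
    (hA : A ∈ checkFam K) (hB : B ∈ K) (hAB : A ⊆ B) (hcard : (B \ A).card ≤ 1) :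
    B ∈ checkFam K := by
  rcases Nat.lt_or_ge (B \ A).card 1 with h | h
  · have h0 : B \ A = ∅ := Finset.card_eq_zero.mp (Nat.lt_one_iff.mp h)
    have hBA : B ⊆ A := Finset.sdiff_eq_empty_iff_subset.mp h0
    have : B = A := Finset.Subset.antisymm hBA hAB
    rwa [this]
  · have hc1 : (B \ A).card = 1 := le_antisymm hcard h
    obtain ⟨hAK, k, Y, h0, hk, hmem, hstep⟩ := hA
    refine ⟨hB, k + 1, fun i => if i ≤ k then Y i else B, ?_, ?_, ?_, ?_⟩
    · simp [Nat.zero_le, h0]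
    · simp
    · intro i hi
      by_cases hik : i ≤ k
      · simpa [hik] using hmem i hik
      · simpa [hik] using hB
    · intro i hi
      rcases Nat.lt_or_ge i k with hik | hik
      · have h1 : i ≤ k := le_of_lt hik
        have h2 : i + 1 ≤ k := hik
        simpa [h1, h2] using hstep i hik
      · have hik' : i = k := le_antisymm (Nat.lt_succ_iff.mp hi) hik
        subst hik'
        have h2 : ¬ (i + 1 ≤ i) := by omega
        simpa [h2, hk] using ⟨hAB, hc1⟩

theorem stmt2 (K : Set (Finset α)) (hempty : ∅ ∈ K) (hU : UnionClosed K) :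
    IsAntimatroid (checkFam K) ∧
      ∀ L : Set (Finset α), IsAntimatroid L → L ⊆ K → L ⊆ checkFam K := by
  have hchk : ∀ X ∈ checkFam K, X ∈ K := fun X hX => hX.1
  have hunion : UnionClosed (checkFam K) := by
    intro X hX Z hZ
    obtain ⟨hZK, k, Y, h0, hk, hmem, hstep⟩ := hZ
    have key : ∀ i ≤ k, X ∪ Y i ∈ checkFam K := by
      intro i
      induction i with
      | zero => intro _; simpa [h0] using hX
      | succ n ih =>
        intro hn
        have hn' : n ≤ k := by omega
        have hnk : n < k := by omega
        have prev := ih hn'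
        obtain ⟨hsub, hc⟩ := hstep n hnk
        refine checkFam_extend prev (hU X (hX.1) _ (hmem (n+1) hn)) ?_ ?_
        · exact Finset.union_subset_union_right hsub
        · calc ((X ∪ Y (n+1)) \ (X ∪ Y n)).card ≤ (Y (n+1) \ Y n).card := by
                apply Finset.card_le_card
                intro a ha
                simp only [Finset.mem_sdiff, Finset.mem_union, not_or] at ha ⊢
                tauto
            _ = 1 := hc
    have := key k le_rfl
    rwa [hk] at this
  have hacc : Accessible (checkFam K) := by
    intro X hX hne
    obtain ⟨hXK, k, Y, h0, hk, hmem, hstep⟩ := hX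
    have hk0 : k ≠ 0 := by
      rintro rfl
      exact hne (by rw [← hk]; exact h0)
    obtain ⟨m, rfl⟩ : ∃ m, k = m + 1 := ⟨k - 1, by omega⟩
    obtain ⟨hsub, hc⟩ := hstep m (Nat.lt_succ_self m)
    rw [hk] at hsub hc
    obtain ⟨x, hx⟩ := Finset.card_eq_one.mp hc
    have hxX : x ∈ X := by
      have : x ∈ X \ Y m := hx ▸ Finset.mem_singleton_self x
      exact (Finset.mem_sdiff.mp this).1
    have hxnY : x ∉ Y m := by
      have : x ∈ X \ Y m := hx ▸ Finset.mem_singleton_self x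
      exact (Finset.mem_sdiff.mp this).2
    refine ⟨x, hxX, ?_⟩
    have heq : X.erase x = Y m := by
      ext y
      simp only [Finset.mem_erase]
      constructor
      · rintro ⟨hyx, hyX⟩
        by_contra hyn
        have : y ∈ X \ Y m := Finset.mem_sdiff.mpr ⟨hyX, hyn⟩
        rw [hx] at this
        exact hyx (Finset.mem_singleton.mp this)
      · intro hy
        exact ⟨fun h => hxnY (h ▸ hy), hsub hy⟩
    rw [heq]
    exact ⟨hmem m (by omega), m, Y, h0, rfl, fun i hi => hmem i (by omega),
      fun i hi => hstep i (by omega)⟩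
  refine ⟨⟨checkFam_empty hempty, hunion, hacc⟩, ?_⟩
  intro L hL hLK
  obtain ⟨hLe, hLu, hLa⟩ := hL
  have main : ∀ n : ℕ, ∀ X ∈ L, X.card = n → X ∈ checkFam K := by
    intro n
    induction n using Nat.strong_induction_on with
    | _ n ih =>
      intro X hX hcard
      rcases eq_or_ne X ∅ with rfl | hne
      · exact checkFam_empty hempty
      · obtain ⟨x, hxX, hxe⟩ := hLa X hX hne
        have hlt : (X.erase x).card < n := by
          rw [← hcard]; exact Finset.card_erase_lt_of_mem hxX
        have hprev := ih _ hlt _ hxe rfl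
        refine checkFam_extend hprev (hLK hX) (Finset.erase_subset x X) ?_
        have : X \ X.erase x = {x} := by
          ext y
          simp only [Finset.mem_sdiff, Finset.mem_erase, Finset.mem_singleton, not_and]
          constructor
          · rintro ⟨hyX, h⟩
            by_contra hyx
            exact (h hyx) hyX
          · rintro rfl; exact ⟨hxX, fun h _ => h rfl⟩
        rw [this]
        simp
  intro X hX
  exact main X.card X hX rfl
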